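/- Let χ be an infinite cardinal and suppose ⟨C_ρ : ρ ∈ R⟩ is a χ-bounded C-sequence on a stationary set R ⊆ acc(κ) ∩ E^κ_{≤χ} (κ regular, κ > χ⁺) such that for every ρ ∈ R and δ ∈ acc(C_ρ), δ ∈ R and C_δ = C_ρ ∩ δ, and such that for every club D ⊆ κ and every ε < κ there exists ρ ∈ R ∩ E^κ_χ with nacc(C_ρ) ⊆ D and min(C_ρ) ≥ ε. Then the set E := {ε < κ : for every club D ⊆ κ there is ρ ∈ R ∩ E^κ_χ with nacc(C_ρ) ⊆* D and min(C_ρ) = ε} is cofinal in κ. -/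

import Mathlib

open Cardinal Set

namespace LadderPaper

/-- `C` is a closed unbounded subset of the ordinal `κ`. -/
def IsClubIn (C : Set Ordinal) (κ : Ordinal) : Prop :=
  C ⊆ Set.Iio κ ∧ (∀ α < κ, ∃ β ∈ C, α ≤ β) ∧
    ∀ α < κ, 0 < α → (∀ β < α, ∃ γ ∈ C, β < γ ∧ γ < α) → α ∈ C

/-- `S` is a stationary subset of the ordinal `κ`. -/
def IsStationaryIn (S : Set Ordinal) (κ : Ordinal) : Prop :=
  S ⊆ Set.Iio κ ∧ ∀ C, IsClubIn C κ → (S ∩ C).Nonempty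

/-- `A` is a ladder system over `S ⊆ κ`: each `A δ` (for `δ ∈ S`) is a cofinal subset of `δ`. -/
def IsLadderOn (κ : Ordinal) (S : Set Ordinal) (A : Ordinal → Set Ordinal) : Prop :=
  IsStationaryIn S κ ∧ ∀ δ ∈ S, A δ ⊆ Set.Iio δ ∧ ∀ β < δ, ∃ α ∈ A δ, β ≤ α

/-- The order type of a set of ordinals. -/
noncomputable def otp (A : Set Ordinal) : Ordinal := Ordinal.type ((· < ·) : A → A → Prop)

/-- The set of accumulation points of a set of ordinals. -/
def acc (A : Set Ordinal) : Set Ordinal := {α ∈ A | sSup (A ∩ Set.Iio α) = α ∧ 0 < α}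

/-- The set of non-accumulation points of a set of ordinals. -/
def nacc (A : Set Ordinal) : Set Ordinal := A \ acc A

/-- Lift a cardinal to the universe where cardinalities of sets of ordinals live. -/
noncomputable abbrev cl (θ : Cardinal.{0}) : Cardinal.{1} := Cardinal.lift.{1} θ

/-- Lift an ordinal to the universe where order types of sets of ordinals live. -/
noncomputable abbrev ol (ξ : Ordinal.{0}) : Ordinal.{1} := Ordinal.lift.{1} ξ

theorem isClubIn_Iio (ν : Ordinal) : IsClubIn (Set.Iio ν) ν :=
  ⟨subset_rfl, fun α hα => ⟨α, hα, le_rfl⟩, fun α hα _ _ => hα⟩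

theorem diag_club (κ : Cardinal.{0}) (hκreg : κ.IsRegular) (hκ : ℵ₀ < κ)
    (D : Ordinal.{0} → Set Ordinal.{0}) (hD : ∀ ε, IsClubIn (D ε) κ.ord) :
    IsClubIn {β | β < κ.ord ∧ ∀ ε < β, β ∈ D ε} κ.ord := by
  have hord : Order.IsSuccLimit κ.ord := Cardinal.isSuccLimit_ord hκreg.aleph0_le
  set ν := κ.ord with hν
  set next : Ordinal → Ordinal → Ordinal := fun ε y => sInf (D ε ∩ Set.Ici y) with hnextdef
  have hnext : ∀ ε, ∀ y < ν, next ε y ∈ D ε ∧ y ≤ next ε y ∧ next ε y < ν := by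
    intro ε y hy
    obtain ⟨β, hβD, hβy⟩ := (hD ε).2.1 y hy
    have hmem := csInf_mem (⟨β, hβD, hβy⟩ : (D ε ∩ Set.Ici y).Nonempty)
    exact ⟨hmem.1, hmem.2, (hD ε).1 hmem.1⟩
  set g : Ordinal → Ordinal := fun y => max (Ordinal.bsup y (fun ε _ => next ε y)) (y + 1)
    with hgdef
  have hg : ∀ y < ν, y < g y ∧ g y < ν := by
    intro y hy
    refine ⟨lt_of_lt_of_le (Order.lt_succ y) (by rw [← Ordinal.add_one_eq_succ]; exact le_max_right _ _), ?_⟩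
    refine max_lt ?_ ?_
    · exact Cardinal.bsup_lt_ord_of_isRegular hκreg (Cardinal.lt_ord.1 hy)
        (fun ε hε => (hnext ε y hy).2.2)
    · rw [Ordinal.add_one_eq_succ]; exact hord.succ_lt hy
  constructor
  · exact fun β hβ => hβ.1
  constructor
  · -- unbounded
    intro α hα
    set x : ℕ → Ordinal := fun n => Nat.rec α (fun _ y => g y) n with hxdef
    have hxs : ∀ n, x (n + 1) = g (x n) := fun n => rfl
    have hxν : ∀ n, x n < ν := by
      intro n
      induction n with
      | zero => exact hα
      | succ n ih => rw [hxs]; exact (hg _ ih).2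
    have hmono : StrictMono x := strictMono_nat_of_lt_succ
      (fun n => by rw [hxs]; exact (hg _ (hxν n)).1)
    set β := ⨆ n, x n with hβdef
    have hle : ∀ n, x n ≤ β := fun n => le_ciSup Ordinal.bddAbove_of_small n
    have hβν : β < ν := Cardinal.iSup_lt_ord_of_isRegular hκreg
      (by simpa using hκ) hxν
    have hlt : ∀ ε < β, ∃ n, ε < x n := by
      intro ε hε
      by_contra hcon
      push_neg at hcon
      exact hε.not_ge (ciSup_le hcon)
    refine ⟨β, ⟨hβν, ?_⟩, le_trans (le_of_eq rfl) (hle 0)⟩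
    intro ε hε
    obtain ⟨n, hn⟩ := hlt ε hε
    refine (hD ε).2.2 β hβν (lt_of_le_of_lt (zero_le (a := ε)) hε) ?_
    intro γ hγ
    obtain ⟨m, hm⟩ := hlt γ hγ
    set k := max n m with hk
    have hεk : ε < x k := hn.trans_le (hmono.monotone (le_max_left n m))
    have hγk : γ < x k := hm.trans_le (hmono.monotone (le_max_right n m))
    refine ⟨next ε (x k), (hnext ε (x k) (hxν k)).1,
      hγk.trans_le (hnext ε (x k) (hxν k)).2.1, ?_⟩
    have h1 : next ε (x k) ≤ x (k + 1) := by
      rw [hxs]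
      exact le_trans (Ordinal.le_bsup (fun ε' _ => next ε' (x k)) ε hεk) (le_max_left _ _)
    exact lt_of_le_of_lt h1 (lt_of_lt_of_le (hmono (Nat.lt_succ_self (k+1))) (hle (k+2)))
  · -- closed
    intro α hα hα0 hcof
    refine ⟨hα, fun ε hε => ?_⟩
    refine (hD ε).2.2 α hα hα0 ?_
    intro γ hγ
    obtain ⟨δ, hδ, h1, h2⟩ := hcof (max γ ε) (max_lt hγ hε)
    exact ⟨δ, hδ.2 ε (lt_of_le_of_lt (le_max_right γ ε) h1),
      lt_of_le_of_lt (le_max_left γ ε) h1, h2⟩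


/-- For a coherent `χ`-bounded `C`-sequence on a stationary
`R ⊆ acc(κ) ∩ E^κ_{≤χ}` guessing clubs relative to every `ε`, the set
`E = {ε < κ | ∀ club D ∃ ρ ∈ R ∩ E^κ_χ, nacc (C ρ) ⊆* D ∧ min (C ρ) = ε}` is cofinal
in `κ`. -/
theorem stmt18 (κ χ : Cardinal.{0}) (hχ : ℵ₀ ≤ χ) (hκreg : κ.IsRegular)
    (hχκ : Order.succ χ < κ)
    (R : Set Ordinal.{0}) (hRstat : IsStationaryIn R κ.ord)
    (hRsub : R ⊆ {δ : Ordinal.{0} | Order.IsSuccLimit δ ∧ δ.cof ≤ χ})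
    (C : Ordinal.{0} → Set Ordinal.{0})
    (hC : ∀ ρ ∈ R, C ρ ⊆ Set.Iio ρ ∧ (∀ β < ρ, ∃ α ∈ C ρ, β ≤ α) ∧
      (∀ α < ρ, 0 < α → (∀ β < α, ∃ γ ∈ C ρ, β < γ ∧ γ < α) → α ∈ C ρ) ∧
      otp (C ρ) ≤ ol χ.ord)
    (hcoh : ∀ ρ ∈ R, ∀ δ ∈ acc (C ρ), δ ∈ R ∧ C δ = C ρ ∩ Set.Iio δ)
    (hguess : ∀ D, IsClubIn D κ.ord → ∀ ε < κ.ord,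
      ∃ ρ ∈ R, ρ.cof = χ ∧ nacc (C ρ) ⊆ D ∧ ε ≤ sInf (C ρ)) :
    ∀ ε₀ < κ.ord, ∃ ε, ε₀ ≤ ε ∧ ε < κ.ord ∧
      ∀ D, IsClubIn D κ.ord → ∃ ρ ∈ R, ρ.cof = χ ∧
        (∃ β < ρ, ∀ α ∈ nacc (C ρ), β < α → α ∈ D) ∧ sInf (C ρ) = ε := by
  intro ε₀ hε₀
  by_contra hcon
  push_neg at hcon
  have hall : ∀ ε, ∃ D, IsClubIn D κ.ord ∧ (ε₀ ≤ ε → ε < κ.ord →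
      ∀ ρ ∈ R, ρ.cof = χ →
        (∃ β < ρ, ∀ α ∈ nacc (C ρ), β < α → α ∈ D) → sInf (C ρ) ≠ ε) := by
    intro ε
    by_cases h1 : ε₀ ≤ ε ∧ ε < κ.ord
    · obtain ⟨D, hD, hbad⟩ := hcon ε h1.1 h1.2
      exact ⟨D, hD, fun _ _ => hbad⟩
    · exact ⟨Set.Iio κ.ord, isClubIn_Iio _, fun h1' h2' => absurd ⟨h1', h2'⟩ h1⟩
  choose D hDclub hDbad using hall
  have hκℵ : ℵ₀ < κ := lt_of_le_of_lt (hχ.trans (Order.le_succ χ)) hχκ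
  obtain ⟨ρ, hρR, hρcof, hnacc, hinf⟩ :=
    hguess _ (diag_club κ hκreg hκℵ D hDclub) ε₀ hε₀
  have hρlt : ρ < κ.ord := hRstat.1 hρR
  have hρlim : Order.IsSuccLimit ρ := (hRsub hρR).1
  have hCne : (C ρ).Nonempty := by
    obtain ⟨a, ha, _⟩ := (hC ρ hρR).2.1 0 hρlim.pos
    exact ⟨a, ha⟩
  have hεC : sInf (C ρ) ∈ C ρ := csInf_mem hCne
  have hερ : sInf (C ρ) < ρ := (hC ρ hρR).1 hεC
  refine hDbad (sInf (C ρ)) hinf (hερ.trans hρlt) ρ hρR hρcof ⟨sInf (C ρ), hερ, ?_⟩ rfl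
  intro α hα hεα
  exact (hnacc hα).2 _ hεα

end LadderPaper
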